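/- For 0 < q < 1, real a, and every nonnegative integer k, the series η_k(a;q) := ∑_{n=0}^∞ (-1)^n q^{n(n-1)/2} · ((1 - aq^{2n+1})/(1 - aq)) · ((aq;q)_n/(q;q)_n) · (q^{-n} + aq^{n+1})^k converges absolutely and equals 0 (assuming aq ≠ 1). -/

import Mathlib

open Finset Filter


/-- The finite q-Pochhammer symbol `(x;q)_n = ∏_{k=0}^{n-1} (1 - x q^k)`. -/
noncomputable def qp (q x : ℝ) (n : ℕ) : ℝ := ∏ k ∈ Finset.range n, (1 - x * q ^ k)

lemma qp_zero (q x : ℝ) : qp q x 0 = 1 := by simp [qp]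

lemma qp_succ (q x : ℝ) (n : ℕ) : qp q x (n+1) = qp q x n * (1 - x * q ^ n) :=
  Finset.prod_range_succ _ _

lemma qp_shift (q x : ℝ) (n : ℕ) : qp q x (n+1) = (1 - x) * qp q (x*q) n := by
  induction n with
  | zero => simp [qp]
  | succ n ih =>
    rw [qp_succ, ih, qp_succ]
    ring_nf

lemma qp_q_pos {q : ℝ} (hq0 : 0 < q) (hq1 : q < 1) (n : ℕ) : 0 < qp q q n := by
  refine Finset.prod_pos fun i _ => ?_
  have : q * q ^ i ≤ q * 1 := by
    have := pow_le_one₀ hq0.le hq1.le (n := i)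
    nlinarith
  nlinarith

lemma qp_q_ge {q : ℝ} (hq0 : 0 < q) (hq1 : q < 1) (n : ℕ) : (1-q)^n ≤ qp q q n := by
  have := Finset.prod_le_prod (s := Finset.range n) (f := fun _ => 1-q)
    (g := fun i => 1 - q * q ^ i) (fun i _ => by linarith)
    (fun i _ => by have h1 : q ^ i ≤ 1 := pow_le_one₀ hq0.le hq1.le; nlinarith)
  simpa [qp] using this

lemma abs_qp_le {q : ℝ} (hq0 : 0 < q) (hq1 : q < 1) (a : ℝ) (n : ℕ) :
    |qp q (a*q) n| ≤ (1+|a|)^n := by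
  rw [qp, Finset.abs_prod]
  have := Finset.prod_le_prod (s := Finset.range n) (f := fun i => |1 - a*q*q^i|)
    (g := fun _ => 1+|a|) (fun i _ => abs_nonneg _) (fun i _ => ?_)
  · simpa using this
  have h1 : q ^ (i+1) ≤ 1 := pow_le_one₀ hq0.le hq1.le
  have h2 : (0:ℝ) < q ^ (i+1) := pow_pos hq0 _
  calc |1 - a*q*q^i| ≤ |(1:ℝ)| + |a*q*q^i| := abs_sub _ _
    _ ≤ 1 + |a| := by
        rw [abs_one]
        have : |a*q*q^i| = |a| * q^(i+1) := by
          rw [abs_mul, abs_mul, abs_of_pos hq0, abs_of_pos (pow_pos hq0 i)]; ring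
        rw [this]
        nlinarith [abs_nonneg a]

lemma tri (n : ℕ) : (n+1)*((n+1)-1)/2 = n*(n-1)/2 + n := by
  rw [← Nat.choose_two_right, ← Nat.choose_two_right, Nat.choose_succ_succ]
  simp [Nat.choose_one_right, Nat.add_comm]

noncomputable def Tm (q a : ℝ) (k n : ℕ) : ℝ :=
  (-1)^n * q^(n*(n-1)/2) * (1 - a*q^(2*n+1)) * (qp q (a*q) n / qp q q n) *
    ((q^n)⁻¹ + a*q^(n+1))^k

lemma summable_aux {q : ℝ} (hq0 : 0 < q) (hq1 : q < 1) {R : ℝ} (hR : 0 < R) :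
    Summable (fun n : ℕ => q^(n*(n-1)/2) * R^n) := by
  have hpos : ∀ n : ℕ, 0 < q^(n*(n-1)/2) * R^n :=
    fun n => mul_pos (pow_pos hq0 _) (pow_pos hR _)
  refine summable_of_ratio_norm_eventually_le (r := 1/2) (by norm_num) ?_
  have hev : ∀ᶠ n : ℕ in atTop, q^n * R ≤ 1/2 := by
    have h0 : Tendsto (fun n : ℕ => q^n * R) atTop (nhds (0*R)) :=
      (tendsto_pow_atTop_nhds_zero_of_lt_one hq0.le hq1).mul_const R
    rw [zero_mul] at h0
    exact h0.eventually_le_const (by norm_num)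
  filter_upwards [hev] with n hn
  have he := tri n
  rw [Real.norm_eq_abs, Real.norm_eq_abs, abs_of_pos (hpos _), abs_of_pos (hpos _),
    he, pow_add, pow_succ]
  calc q^(n*(n-1)/2) * q^n * (R^n * R) = (q^n * R) * (q^(n*(n-1)/2) * R^n) := by ring
    _ ≤ (1/2) * (q^(n*(n-1)/2) * R^n) := by
        exact mul_le_mul_of_nonneg_right hn (hpos n).le

lemma abs_Tm_le {q : ℝ} (hq0 : 0 < q) (hq1 : q < 1) (a : ℝ) (k n : ℕ) :
    |Tm q a k n| ≤ (1+|a|)^(k+1) * (q^(n*(n-1)/2) * ((1+|a|)/((1-q)*q^k))^n) := by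
  have hqp := qp_q_pos hq0 hq1 n
  have h1q : (0:ℝ) < 1 - q := by linarith
  have h1 : |Tm q a k n| = q^(n*(n-1)/2) * |1-a*q^(2*n+1)| *
      (|qp q (a*q) n| / qp q q n) * |(q^n)⁻¹+a*q^(n+1)|^k := by
    simp [Tm, abs_mul, abs_div, abs_pow, abs_of_pos (pow_pos hq0 _), abs_of_pos hqp]
  rw [h1]
  have hb1 : |1-a*q^(2*n+1)| ≤ 1+|a| := by
    calc |1-a*q^(2*n+1)| ≤ |(1:ℝ)| + |a*q^(2*n+1)| := abs_sub _ _
      _ ≤ 1 + |a| := by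
          rw [abs_one, abs_mul, abs_of_pos (pow_pos hq0 _)]
          have h1 : q ^ (2*n+1) ≤ 1 := pow_le_one₀ hq0.le hq1.le
          nlinarith [abs_nonneg a]
  have hqn : (0:ℝ) < q^n := pow_pos hq0 _
  have h3 : q^(n+1) * q^n ≤ 1 := by
    rw [← pow_add]; exact pow_le_one₀ hq0.le hq1.le
  have h2 : q^(n+1) ≤ (q^n)⁻¹ := by
    rw [← one_div]; exact (le_div_iff₀ hqn).mpr h3
  have hb2 : |(q^n)⁻¹+a*q^(n+1)| ≤ (1+|a|) * (q^n)⁻¹ := by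
    calc |(q^n)⁻¹+a*q^(n+1)| ≤ |(q^n)⁻¹| + |a*q^(n+1)| := abs_add_le _ _
      _ ≤ (1+|a|) * (q^n)⁻¹ := by
          rw [abs_of_pos (inv_pos.mpr hqn), abs_mul, abs_of_pos (pow_pos hq0 _)]
          nlinarith [abs_nonneg a, inv_pos.mpr hqn]
  have hr : (1+|a|)^(k+1) * (q^(n*(n-1)/2) * ((1+|a|)/((1-q)*q^k))^n)
      = q^(n*(n-1)/2) * (1+|a|) * ((1+|a|)^n/(1-q)^n) * ((1+|a|)*(q^n)⁻¹)^k := by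
    rw [div_pow, mul_pow, mul_pow, inv_pow, ← pow_mul q n k, Nat.mul_comm n k]
    field_simp
    ring
  rw [hr]
  gcongr
  all_goals first
    | positivity
    | exact hb1
    | exact hb2
    | exact qp_q_ge hq0 hq1 n
    | exact abs_qp_le hq0 hq1 a n

lemma summable_abs_Tm {q : ℝ} (hq0 : 0 < q) (hq1 : q < 1) (a : ℝ) (k : ℕ) :
    Summable (fun n => |Tm q a k n|) := by
  have h1q : (0:ℝ) < 1 - q := by linarith
  have hR : (0:ℝ) < (1+|a|)/((1-q)*q^k) := by positivity
  exact Summable.of_nonneg_of_le (fun n => abs_nonneg _)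
    (fun n => abs_Tm_le hq0 hq1 a k n) ((summable_aux hq0 hq1 hR).mul_left _)

lemma tri' (n : ℕ) : n*(n+1)/2 = n*(n-1)/2 + n := by
  rw [Nat.mul_comm n (n+1)]; exact tri n

lemma partial_sum {q : ℝ} (hq0 : 0 < q) (hq1 : q < 1) (a : ℝ) (N : ℕ) :
    ∑ n ∈ Finset.range (N+1), Tm q a 0 n
      = (-1)^N * q^(N*(N+1)/2) * qp q (a*q) (N+1) / qp q q N := by
  induction N with
  | zero => simp [Tm, qp]
  | succ N ih =>
    rw [Finset.sum_range_succ, ih]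
    have t1 : N*(N+1)/2 = N*(N-1)/2 + N := tri' N
    have t2 : (N+1)*((N+1)-1)/2 = N*(N-1)/2 + N := by simpa using tri N
    have t3 : (N+1)*(N+1+1)/2 = N*(N-1)/2 + N + (N+1) := by
      rw [tri' (N+1), t2]
    have hqp := qp_q_pos hq0 hq1 N
    have hfac : (0:ℝ) < 1 - q * q^N := by
      have h1 : q * q^N ≤ q * 1 := by
        have := pow_le_one₀ hq0.le hq1.le (n := N); nlinarith
      nlinarith
    simp only [Tm, t1, t2, t3, pow_zero, mul_one]
    rw [qp_succ q (a*q) (N+1), qp_succ q q N]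
    field_simp [hqp.ne', hfac.ne']
    ring

lemma hasSum_Tm_zero {q : ℝ} (hq0 : 0 < q) (hq1 : q < 1) (a : ℝ) :
    HasSum (Tm q a 0) 0 := by
  have h1q : (0:ℝ) < 1 - q := by linarith
  have hsum : Summable (Tm q a 0) := summable_abs_iff.mp (summable_abs_Tm hq0 hq1 a 0)
  have h1 : Filter.Tendsto (fun N => ∑ n ∈ Finset.range N, Tm q a 0 n) atTop
      (nhds (∑' n, Tm q a 0 n)) := hsum.hasSum.tendsto_sum_nat
  have hR : (0:ℝ) < (1+|a|)*q/(1-q) := by positivity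
  have hg : Filter.Tendsto
      (fun N : ℕ => (1+|a|) * (q^(N*(N-1)/2) * ((1+|a|)*q/(1-q))^N)) atTop (nhds 0) :=
    ((summable_aux hq0 hq1 hR).mul_left (1+|a|)).tendsto_atTop_zero
  have hb : ∀ N : ℕ, ‖(-1:ℝ)^N * q^(N*(N+1)/2) * qp q (a*q) (N+1) / qp q q N‖
      ≤ (1+|a|) * (q^(N*(N-1)/2) * ((1+|a|)*q/(1-q))^N) := by
    intro N
    have hqp := qp_q_pos hq0 hq1 N
    rw [Real.norm_eq_abs, abs_div, abs_mul, abs_mul, abs_pow, abs_neg, abs_one, one_pow,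
      one_mul, abs_of_pos (pow_pos hq0 _), abs_of_pos hqp, tri', pow_add]
    have hrhs : (1+|a|) * (q^(N*(N-1)/2) * ((1+|a|)*q/(1-q))^N)
        = q^(N*(N-1)/2) * q^N * (1+|a|)^(N+1) / (1-q)^N := by
      rw [div_pow, mul_pow]
      field_simp
      ring
    rw [hrhs]
    gcongr
    all_goals first
      | positivity
      | exact qp_q_ge hq0 hq1 N
      | exact abs_qp_le hq0 hq1 a (N+1)
  have h2 : Filter.Tendsto (fun N => ∑ n ∈ Finset.range N, Tm q a 0 n) atTop (nhds 0) := by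
    rw [← Filter.tendsto_add_atTop_iff_nat 1]
    have heq : (fun N : ℕ => ∑ n ∈ Finset.range (N+1), Tm q a 0 n)
        = fun N : ℕ => (-1)^N * q^(N*(N+1)/2) * qp q (a*q) (N+1) / qp q q N := by
      funext N; exact partial_sum hq0 hq1 a N
    rw [heq]
    exact squeeze_zero_norm hb hg
  have := tendsto_nhds_unique h1 h2
  rw [← this]
  exact hsum.hasSum

lemma Tm_step {q : ℝ} (hq0 : 0 < q) (hq1 : q < 1) (a : ℝ) (k m : ℕ) :
    Tm q a (k+1) (m+1) = (1+a*q) * Tm q a k (m+1)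
      - ((1-a*q)*(1-a*q^2)/q^(k+1)) * Tm q (a*q^2) k m := by
  have hq := hq0.ne'
  have hqm : (q:ℝ)^m ≠ 0 := pow_ne_zero _ hq
  have hB := (qp_q_pos hq0 hq1 m).ne'
  have hfac : (1:ℝ) - q * q^m ≠ 0 := by
    have h1 : q * q^m ≤ q * 1 := by
      have := pow_le_one₀ hq0.le hq1.le (n := m); nlinarith
    intro hcon; nlinarith
  have t2 : (m+1)*((m+1)-1)/2 = m*(m-1)/2 + m := by simpa using tri m
  have hmu : ((q^(m+1))⁻¹ + a*q^(m+1+1)) = ((q^m)⁻¹ + (a*q^2)*q^(m+1))/q := by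
    field_simp
    ring
  have hL : qp q (a*q^2) m * (1 - a*q^2*q^m) = (1-a*q^2) * qp q (a*q^2*q) m :=
    (qp_succ q (a*q^2) m).symm.trans (qp_shift q (a*q^2) m)
  have hsh : qp q (a*q) (m+1) = (1-a*q) * qp q (a*q^2) m := by
    rw [qp_shift q (a*q) m, show a*q*q = a*q^2 by ring]
  have hT' : (1-a*q^2) * Tm q (a*q^2) k m
      = (-1)^m * q^(m*(m-1)/2) * (1 - a*q^2*q^(2*m+1)) *
        ((qp q (a*q^2) m * (1 - a*q^2*q^m)) / qp q q m) * ((q^m)⁻¹ + a*q^2*q^(m+1))^k := by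
    simp only [Tm]
    rw [hL]
    ring
  rw [show (1+a*q) * Tm q a k (m+1) - ((1-a*q)*(1-a*q^2)/q^(k+1)) * Tm q (a*q^2) k m
      = (1+a*q) * Tm q a k (m+1) - ((1-a*q)/q^(k+1)) * ((1-a*q^2) * Tm q (a*q^2) k m)
      from by ring, hT']
  simp only [Tm, t2, qp_succ q q m, hsh]
  rw [hmu]
  simp only [div_pow, pow_succ]
  field_simp
  ring

lemma hasSum_Tm {q : ℝ} (hq0 : 0 < q) (hq1 : q < 1) :
    ∀ (k : ℕ) (a : ℝ), HasSum (Tm q a k) 0 := by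
  intro k
  induction k with
  | zero => exact fun a => hasSum_Tm_zero hq0 hq1 a
  | succ k ih =>
    intro a
    have h1 : HasSum (Tm q (a*q^2) k) 0 := ih (a*q^2)
    set U : ℕ → ℝ := fun n => match n with
      | 0 => 0
      | (m+1) => Tm q (a*q^2) k m with hUdef
    have hU : HasSum U 0 := by
      have h2 : HasSum (fun n => U (n+1)) 0 := h1
      have h3 := (hasSum_nat_add_iff (f := U) 1).mp h2
      simpa [hUdef] using h3
    have heq : Tm q a (k+1) = fun n =>
        (1+a*q) * Tm q a k n - ((1-a*q)*(1-a*q^2)/q^(k+1)) * U n := by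
      funext n
      cases n with
      | zero =>
        simp only [hUdef]
        simp [Tm, qp_zero, pow_succ]
        ring
      | succ m => exact Tm_step hq0 hq1 a k m
    rw [heq]
    have := ((ih a).mul_left (1+a*q)).sub (hU.mul_left ((1-a*q)*(1-a*q^2)/q^(k+1)))
    simpa using this

/-- All the moments `η_k(a;q)` (A.8) of the signed measure with weights
`(-1)^n q^{n(n-1)/2} (1-aq^{2n+1})(aq;q)_n/((1-aq)(q;q)_n)` against powers of the
lattice `μ(n;a)=q^{-n}+aq^{n+1}` converge absolutely and vanish. -/
theorem eta_k_vanishes (q a : ℝ) (hq0 : 0 < q) (hq1 : q < 1)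
    (h : a * q ≠ 1) (k : ℕ) :
    Summable (fun n : ℕ =>
        |(-1 : ℝ) ^ n * q ^ (n * (n - 1) / 2) *
          ((1 - a * q ^ (2 * n + 1)) / (1 - a * q)) *
          (qp q (a * q) n / qp q q n) *
          (q ^ (-(n : ℤ)) + a * q ^ (n + 1)) ^ k|) ∧
    HasSum (fun n : ℕ =>
        (-1 : ℝ) ^ n * q ^ (n * (n - 1) / 2) *
          ((1 - a * q ^ (2 * n + 1)) / (1 - a * q)) *
          (qp q (a * q) n / qp q q n) *
          (q ^ (-(n : ℤ)) + a * q ^ (n + 1)) ^ k)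
      0 := by
  have hne : (1:ℝ) - a*q ≠ 0 := by
    intro hc; exact h (by linarith)
  have heq : ∀ n : ℕ,
        (-1 : ℝ) ^ n * q ^ (n * (n - 1) / 2) *
          ((1 - a * q ^ (2 * n + 1)) / (1 - a * q)) *
          (qp q (a * q) n / qp q q n) *
          (q ^ (-(n : ℤ)) + a * q ^ (n + 1)) ^ k
      = Tm q a k n * (1 - a*q)⁻¹ := by
    intro n
    simp only [Tm, zpow_neg, zpow_natCast]
    ring
  constructor
  · simp only [heq]
    have := (summable_abs_Tm hq0 hq1 a k).mul_right |(1 - a*q)⁻¹|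
    refine this.congr fun n => ?_
    rw [abs_mul]
  · simp only [heq]
    simpa using (hasSum_Tm hq0 hq1 k a).mul_right (1 - a*q)⁻¹
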